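/- Let X be a GC₄-set of 15 nodes with no 5 collinear nodes. Then any line passing through exactly 4 nodes of X is used by at most three nodes of X. -/

import Mathlib

open MvPolynomial

noncomputable section
open scoped Classical

/-- Bivariate real polynomials. -/
abbrev Poly2 := MvPolynomial (Fin 2) ℝ

/-- Evaluation of a bivariate polynomial at a point of the plane. -/
def evalPt (A : Fin 2 → ℝ) (p : Poly2) : ℝ := MvPolynomial.eval A p

/-- A line is (identified with) a polynomial of total degree 1. -/
def IsLine (ℓ : Poly2) : Prop := ℓ.totalDegree = 1

/-- `X` is `n`-poised: unique interpolation from Π_n at the nodes of `X`. -/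
def Poised (n : ℕ) (X : Finset (Fin 2 → ℝ)) : Prop :=
  ∀ c : (Fin 2 → ℝ) → ℝ,
    ∃! p : Poly2, p.totalDegree ≤ n ∧ ∀ A ∈ X, evalPt A p = c A

/-- `p` is an `n`-fundamental polynomial of the node `A` of `X`. -/
def IsFund (n : ℕ) (X : Finset (Fin 2 → ℝ)) (A : Fin 2 → ℝ) (p : Poly2) : Prop :=
  p.totalDegree ≤ n ∧ evalPt A p = 1 ∧ ∀ B ∈ X, B ≠ A → evalPt B p = 0

/-- A `GC_n`-set: an `n`-poised set all of whose nodes have fundamental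
polynomials that are products of `n` linear factors. -/
def GCSet (n : ℕ) (X : Finset (Fin 2 → ℝ)) : Prop :=
  Poised n X ∧
    ∀ A ∈ X, ∃ f : Fin n → Poly2, (∀ i, IsLine (f i)) ∧ IsFund n X A (∏ i, f i)

/-- The node `A` uses the line `ℓ`: `ℓ` divides a fundamental polynomial of `A`. -/
def Uses (n : ℕ) (X : Finset (Fin 2 → ℝ)) (A : Fin 2 → ℝ) (ℓ : Poly2) : Prop :=
  ∃ p, IsFund n X A p ∧ ℓ ∣ p

/-- The nodes of `X` lying on the line `ℓ`. -/
def nodesOn (X : Finset (Fin 2 → ℝ)) (ℓ : Poly2) : Finset (Fin 2 → ℝ) :=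
  X.filter (fun A => evalPt A ℓ = 0)

/-- `X` contains no 5 collinear nodes. -/
def NoFiveCollinear (X : Finset (Fin 2 → ℝ)) : Prop :=
  ∀ ℓ : Poly2, IsLine ℓ → (nodesOn X ℓ).card ≤ 4


def lin (a b c : ℝ) : Poly2 := C a * X 0 + C b * X 1 + C c

lemma evalPt_lin (P : Fin 2 → ℝ) (a b c : ℝ) :
    evalPt P (lin a b c) = a * P 0 + b * P 1 + c := by
  simp [evalPt, lin]

lemma totalDegree_lin_le (a b c : ℝ) : (lin a b c).totalDegree ≤ 1 := by
  unfold lin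
  refine (totalDegree_add _ _).trans ?_
  simp only [max_le_iff]
  constructor
  · refine (totalDegree_add _ _).trans ?_
    simp only [max_le_iff]
    constructor <;>
    · refine (totalDegree_mul _ _).trans ?_
      simp [totalDegree_X]
  · simp [totalDegree_C]

lemma isLine_lin (a b c : ℝ) (h : a ≠ 0 ∨ b ≠ 0) : (lin a b c).totalDegree = 1 := by
  refine le_antisymm (totalDegree_lin_le a b c) ?_
  rcases h with h | h
  · have hc : coeff (Finsupp.single 0 1) (lin a b c) = a := by
      simp [lin, coeff_X', Finsupp.single_eq_single_iff]
      exact fun h => absurd h.symm (by simp)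
    have hs : (Finsupp.single (0 : Fin 2) 1) ∈ (lin a b c).support := by
      rw [mem_support_iff, hc]; exact h
    have := le_totalDegree hs
    simpa using this
  · have hc : coeff (Finsupp.single 1 1) (lin a b c) = b := by
      simp [lin, coeff_X', Finsupp.single_eq_single_iff]
      exact fun h => absurd h.symm (by simp)
    have hs : (Finsupp.single (1 : Fin 2) 1) ∈ (lin a b c).support := by
      rw [mem_support_iff, hc]; exact h
    have := le_totalDegree hs
    simpa using this

/-- Orientation determinant of three points. -/
def det3 (A B C : Fin 2 → ℝ) : ℝ :=
  (B 0 - A 0) * (C 1 - A 1) - (B 1 - A 1) * (C 0 - A 0)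

lemma det3_self_right (A B : Fin 2 → ℝ) : det3 A B B = 0 := by unfold det3; ring
lemma det3_self_mid (A B : Fin 2 → ℝ) : det3 A A B = 0 := by unfold det3; ring
lemma det3_swap (A B C : Fin 2 → ℝ) : det3 A B C = - det3 A C B := by unfold det3; ring
lemma det3_cyc (A B C : Fin 2 → ℝ) : det3 A B C = det3 B C A := by unfold det3; ring

lemma pt_ne_iff {A B : Fin 2 → ℝ} (h : B ≠ A) : B 0 ≠ A 0 ∨ B 1 ≠ A 1 := by
  by_contra hc
  push_neg at hc
  exact h (funext fun i => by fin_cases i <;> simp [hc.1, hc.2])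

lemma det3_trans {A B C D : Fin 2 → ℝ} (hC : C ≠ A)
    (h1 : det3 A B C = 0) (h2 : det3 A C D = 0) : det3 A B D = 0 := by
  rcases pt_ne_iff hC with h | h
  · have key : (C 0 - A 0) * det3 A B D = 0 := by
      unfold det3 at *
      linear_combination (D 0 - A 0) * h1 + (B 0 - A 0) * h2
    rcases mul_eq_zero.mp key with h' | h'
    · exact absurd (sub_eq_zero.mp h') h
    · exact h'
  · have key : (C 1 - A 1) * det3 A B D = 0 := by
      unfold det3 at *
      linear_combination (D 1 - A 1) * h1 + (B 1 - A 1) * h2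
    rcases mul_eq_zero.mp key with h' | h'
    · exact absurd (sub_eq_zero.mp h') h
    · exact h'

/-- The line through two points `B`, `C`. -/
def lineThrough (B C : Fin 2 → ℝ) : Poly2 :=
  lin (C 1 - B 1) (B 0 - C 0) (B 1 * C 0 - B 0 * C 1)

lemma evalPt_lineThrough (P B C : Fin 2 → ℝ) :
    evalPt P (lineThrough B C) = - det3 P B C := by
  rw [lineThrough, evalPt_lin]; unfold det3; ring

lemma lineThrough_deg_le (B C : Fin 2 → ℝ) : (lineThrough B C).totalDegree ≤ 1 :=
  totalDegree_lin_le _ _ _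

lemma isLine_lineThrough {B C : Fin 2 → ℝ} (h : B ≠ C) :
    (lineThrough B C).totalDegree = 1 := by
  apply isLine_lin
  rcases pt_ne_iff (Ne.symm h) with h' | h'
  · right; exact sub_ne_zero.mpr h'.symm
  · left; exact sub_ne_zero.mpr h'

/-- A line through `B` avoiding `A`. -/
def sline (A B : Fin 2 → ℝ) : Poly2 :=
  if B 0 = A 0 then lin 0 1 (-(B 1)) else lin 1 0 (-(B 0))

lemma sline_deg_le (A B : Fin 2 → ℝ) : (sline A B).totalDegree ≤ 1 := by
  unfold sline; split <;> exact totalDegree_lin_le _ _ _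

lemma evalPt_sline_self (A B : Fin 2 → ℝ) : evalPt B (sline A B) = 0 := by
  unfold sline; split <;> (rw [evalPt_lin]; ring)

lemma evalPt_sline_ne {A B : Fin 2 → ℝ} (h : B ≠ A) : evalPt A (sline A B) ≠ 0 := by
  unfold sline
  split
  · rename_i h0
    rw [evalPt_lin]
    have : B 1 ≠ A 1 := by
      rcases pt_ne_iff h with h' | h'
      · exact absurd h0 h'
      · exact h'
    intro hc; apply this; linarith
  · rename_i h0
    rw [evalPt_lin]
    intro hc; apply h0; linarith


lemma class_eq_of_rel {A B D : Fin 2 → ℝ} (S : Finset (Fin 2 → ℝ))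
    (hB : B ≠ A) (hD : D ≠ A) (h : det3 A B D = 0) :
    S.filter (fun C => det3 A D C = 0) = S.filter (fun C => det3 A B C = 0) := by
  ext C
  simp only [Finset.mem_filter, and_congr_right_iff]
  intro _
  constructor
  · intro h2
    exact det3_trans hD h h2
  · intro h2
    have hDB : det3 A D B = 0 := by rw [det3_swap] at h; linarith
    exact det3_trans hB hDB h2

/-- Any "class" of points of `X` collinear with two fixed nodes has at most 3 elements,
assuming no five collinear nodes. -/
lemma class_card_le {X S : Finset (Fin 2 → ℝ)} (h5 : NoFiveCollinear X)
    {A B : Fin 2 → ℝ} (hA : A ∈ X) (hSX : S ⊆ X) (hAS : A ∉ S)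
    (hB : B ∈ S) :
    (S.filter (fun C => det3 A B C = 0)).card ≤ 3 := by
  have hBA : B ≠ A := fun h => hAS (h ▸ hB)
  set L := lineThrough A B with hL
  have hline : IsLine L := isLine_lineThrough (Ne.symm hBA)
  have hsub : insert A (S.filter (fun C => det3 A B C = 0)) ⊆ nodesOn X L := by
    intro C hC
    rcases Finset.mem_insert.mp hC with rfl | hC
    · refine Finset.mem_filter.mpr ⟨hA, ?_⟩
      rw [evalPt_lineThrough, det3_self_mid]; ring
    · rcases Finset.mem_filter.mp hC with ⟨hCS, hdet⟩
      refine Finset.mem_filter.mpr ⟨hSX hCS, ?_⟩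
      rw [evalPt_lineThrough]
      have : det3 C A B = det3 A B C := by rw [det3_cyc]
      rw [this, hdet]; ring
  have hAnot : A ∉ S.filter (fun C => det3 A B C = 0) :=
    fun h => hAS (Finset.mem_filter.mp h).1
  have := Finset.card_le_card hsub
  rw [Finset.card_insert_of_notMem hAnot] at this
  have h4 := h5 L hline
  omega

/-- Cover lemma: a set of at most `2k` points, none equal to `A`, whose "collinear with `A`"
classes all have at most `k` elements, can be annihilated by a polynomial of degree at most `k`
not vanishing at `A`. -/
lemma cover_lemma (k : ℕ) : ∀ (S : Finset (Fin 2 → ℝ)) (A : Fin 2 → ℝ), A ∉ S →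
    S.card ≤ 2 * k →
    (∀ B ∈ S, (S.filter (fun C => det3 A B C = 0)).card ≤ k) →
    ∃ q : Poly2, q.totalDegree ≤ k ∧ (∀ B ∈ S, evalPt B q = 0) ∧ evalPt A q ≠ 0 := by
  induction k with
  | zero =>
    intro S A _ hcard _
    have : S = ∅ := Finset.card_eq_zero.mp (by omega)
    subst this
    exact ⟨1, by simp [totalDegree_one], by simp, by simp [evalPt]⟩
  | succ k ih =>
    intro S A hAS hcard hclass
    rcases eq_or_ne S ∅ with rfl | hSne
    · exact ⟨1, by simp [totalDegree_one], by simp, by simp [evalPt]⟩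
    have hSne' : S.Nonempty := Finset.nonempty_iff_ne_empty.mpr hSne
    by_cases hone : ∃ B₀ ∈ S, ∀ C ∈ S, det3 A B₀ C = 0
    · -- all points in a single class: at most k+1 of them, use one line per point
      obtain ⟨B₀, hB₀, hall⟩ := hone
      have hSk : S.card ≤ k + 1 := by
        have := hclass B₀ hB₀
        rwa [Finset.filter_true_of_mem hall] at this
      refine ⟨∏ B ∈ S, sline A B, ?_, ?_, ?_⟩
      · refine (totalDegree_finset_prod _ _).trans ?_
        calc ∑ B ∈ S, (sline A B).totalDegree ≤ ∑ B ∈ S, 1 :=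
              Finset.sum_le_sum (fun B _ => sline_deg_le A B)
          _ = S.card := by simp
          _ ≤ k + 1 := hSk
      · intro B hB
        have : evalPt B (sline A B) = 0 := evalPt_sline_self A B
        simp only [evalPt, map_prod]
        exact Finset.prod_eq_zero hB this
      · simp only [evalPt, map_prod]
        rw [Finset.prod_ne_zero_iff]
        intro B hB
        exact evalPt_sline_ne (fun h => hAS (h ▸ hB))
    · push_neg at hone
      -- pick B in a largest class
      obtain ⟨B, hB, hmax⟩ := Finset.exists_max_image S
        (fun B => (S.filter (fun C => det3 A B C = 0)).card) hSne'
      -- pick B' in a largest class among points not collinear with A, B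
      have hS2ne : (S.filter (fun C => det3 A B C ≠ 0)).Nonempty := by
        obtain ⟨C, hC, hCd⟩ := hone B hB
        exact ⟨C, Finset.mem_filter.mpr ⟨hC, hCd⟩⟩
      obtain ⟨B', hB'mem, hmax'⟩ := Finset.exists_max_image
        (S.filter (fun C => det3 A B C ≠ 0))
        (fun B => (S.filter (fun C => det3 A B C = 0)).card) hS2ne
      rcases Finset.mem_filter.mp hB'mem with ⟨hB'S, hBB'⟩
      have hBA : B ≠ A := fun h => hAS (h ▸ hB)
      have hB'A : B' ≠ A := fun h => hAS (h ▸ hB'S)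
      have hBneB' : B ≠ B' := fun h => hBB' (h ▸ det3_self_right A B)
      set L := lineThrough B B' with hLdef
      have hevalA : evalPt A L ≠ 0 := by
        rw [evalPt_lineThrough]
        simp only [neg_ne_zero]
        exact hBB'
      set T := S.filter (fun C => evalPt C L = 0) with hTdef
      have hBT : B ∈ T := Finset.mem_filter.mpr ⟨hB, by
        rw [evalPt_lineThrough, det3_self_mid]; ring⟩
      have hB'T : B' ∈ T := Finset.mem_filter.mpr ⟨hB'S, by
        rw [evalPt_lineThrough, det3_swap, det3_self_mid]; ring⟩
      set S' := S \ T with hS'def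
      have hS'sub : S' ⊆ S := Finset.sdiff_subset
      have hcard' : S'.card ≤ 2 * k := by
        have hT2 : 2 ≤ T.card := by
          have : {B, B'} ⊆ T := by
            intro x hx; rcases Finset.mem_insert.mp hx with rfl | hx
            · exact hBT
            · rw [Finset.mem_singleton.mp hx]; exact hB'T
          calc 2 = ({B, B'} : Finset _).card := by
                rw [Finset.card_insert_of_notMem (by simpa using hBneB'), Finset.card_singleton]
            _ ≤ T.card := Finset.card_le_card this
        have hcc : S'.card + T.card = S.card := by
          rw [hS'def]
          exact Finset.card_sdiff_add_card_eq_card (Finset.filter_subset _ S)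
        omega
      have hAS' : A ∉ S' := fun h => hAS (hS'sub h)
      -- class bound for S'
      have hclass' : ∀ D ∈ S', (S'.filter (fun C => det3 A D C = 0)).card ≤ k := by
        intro D hD
        have hDS : D ∈ S := hS'sub hD
        have hDA : D ≠ A := fun h => hAS (h ▸ hDS)
        by_cases hDB : det3 A B D = 0
        · -- D is in the class of B
          have hKeq : S.filter (fun C => det3 A D C = 0) = S.filter (fun C => det3 A B C = 0) :=
            class_eq_of_rel S hBA hDA hDB
          have hsub2 : S'.filter (fun C => det3 A D C = 0) ⊆
              (S.filter (fun C => det3 A B C = 0)).erase B := by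
            intro C hC
            rcases Finset.mem_filter.mp hC with ⟨hCS', hCd⟩
            refine Finset.mem_erase.mpr ⟨?_, hKeq ▸ Finset.mem_filter.mpr ⟨hS'sub hCS', hCd⟩⟩
            intro hCB
            subst hCB
            exact (Finset.mem_sdiff.mp hCS').2 hBT
          have := Finset.card_le_card hsub2
          have h2 := Finset.card_erase_le (s := S.filter (fun C => det3 A B C = 0)) (a := B)
          have h3 := hclass B hB
          have hBin : B ∈ S.filter (fun C => det3 A B C = 0) :=
            Finset.mem_filter.mpr ⟨hB, det3_self_right A B⟩
          rw [Finset.card_erase_of_mem hBin] at this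
          omega
        · by_cases hDB' : det3 A B' D = 0
          · -- D is in the class of B'
            have hKeq : S.filter (fun C => det3 A D C = 0) = S.filter (fun C => det3 A B' C = 0) :=
              class_eq_of_rel S hB'A hDA hDB'
            have hsub2 : S'.filter (fun C => det3 A D C = 0) ⊆
                (S.filter (fun C => det3 A B' C = 0)).erase B' := by
              intro C hC
              rcases Finset.mem_filter.mp hC with ⟨hCS', hCd⟩
              refine Finset.mem_erase.mpr ⟨?_, hKeq ▸ Finset.mem_filter.mpr ⟨hS'sub hCS', hCd⟩⟩
              intro hCB
              subst hCB
              exact (Finset.mem_sdiff.mp hCS').2 hB'T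
            have := Finset.card_le_card hsub2
            have h3 := hclass B' hB'S
            have hB'in : B' ∈ S.filter (fun C => det3 A B' C = 0) :=
              Finset.mem_filter.mpr ⟨hB'S, det3_self_right A B'⟩
            rw [Finset.card_erase_of_mem hB'in] at this
            omega
          · -- D is in neither class; then the second-largest class has size ≤ k
            have hDfilter : D ∈ S.filter (fun C => det3 A B C ≠ 0) :=
              Finset.mem_filter.mpr ⟨hDS, hDB⟩
            have hfD : (S.filter (fun C => det3 A D C = 0)).card ≤
                (S.filter (fun C => det3 A B' C = 0)).card := hmax' D hDfilter
            have hB'k : (S.filter (fun C => det3 A B' C = 0)).card ≤ k := by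
              by_contra hgt
              push_neg at hgt
              have hB'card : (S.filter (fun C => det3 A B' C = 0)).card = k + 1 :=
                le_antisymm (hclass B' hB'S) hgt
              have hBcard : (S.filter (fun C => det3 A B C = 0)).card = k + 1 := by
                have h1 := hclass B hB
                have h2 := hmax B' hB'S
                omega
              -- the two classes are disjoint and D is in neither
              have hdisj : Disjoint (S.filter (fun C => det3 A B C = 0))
                  (S.filter (fun C => det3 A B' C = 0)) := by
                rw [Finset.disjoint_left]
                intro E hE hE'
                rcases Finset.mem_filter.mp hE with ⟨hES, hEd⟩
                rcases Finset.mem_filter.mp hE' with ⟨_, hEd'⟩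
                have hEA : E ≠ A := fun h => hAS (h ▸ hES)
                have : det3 A E B' = 0 := by rw [det3_swap] at hEd'; linarith
                exact hBB' (det3_trans hEA hEd this)
              have hunion : (S.filter (fun C => det3 A B C = 0)) ∪
                  (S.filter (fun C => det3 A B' C = 0)) ⊆ S := by
                intro x hx
                rcases Finset.mem_union.mp hx with hx | hx <;>
                  exact (Finset.mem_filter.mp hx).1
              have hDnotin : D ∉ (S.filter (fun C => det3 A B C = 0)) ∪
                  (S.filter (fun C => det3 A B' C = 0)) := by
                intro hx
                rcases Finset.mem_union.mp hx with hx | hx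
                · exact hDB (Finset.mem_filter.mp hx).2
                · exact hDB' (Finset.mem_filter.mp hx).2
              have hins : insert D ((S.filter (fun C => det3 A B C = 0)) ∪
                  (S.filter (fun C => det3 A B' C = 0))) ⊆ S := by
                intro x hx
                rcases Finset.mem_insert.mp hx with rfl | hx
                · exact hDS
                · exact hunion hx
              have hc1 := Finset.card_le_card hins
              rw [Finset.card_insert_of_notMem hDnotin,
                Finset.card_union_of_disjoint hdisj, hBcard, hB'card] at hc1
              omega
            calc (S'.filter (fun C => det3 A D C = 0)).card
                ≤ (S.filter (fun C => det3 A D C = 0)).card :=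
                  Finset.card_le_card (Finset.filter_subset_filter _ hS'sub)
              _ ≤ k := le_trans hfD hB'k
      obtain ⟨q', hq'deg, hq'van, hq'A⟩ := ih S' A hAS' hcard' hclass'
      refine ⟨L * q', ?_, ?_, ?_⟩
      · refine (totalDegree_mul _ _).trans ?_
        have hl1 : L.totalDegree ≤ 1 := lineThrough_deg_le B B'
        omega
      · intro C hC
        simp only [evalPt, map_mul]
        by_cases hCT : evalPt C L = 0
        · rw [evalPt] at hCT; rw [hCT]; ring
        · have : C ∈ S' := Finset.mem_sdiff.mpr ⟨hC, fun h => hCT (Finset.mem_filter.mp h).2⟩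
          have := hq'van C this
          rw [evalPt] at this; rw [this]; ring
      · simp only [evalPt, map_mul]
        rw [evalPt] at hevalA hq'A
        exact mul_ne_zero hevalA hq'A

lemma top_component_ne_zero {p : Poly2} (hp : p ≠ 0) :
    homogeneousComponent p.totalDegree p ≠ 0 := by
  have hsupp : p.support.Nonempty := by
    rwa [Finset.nonempty_iff_ne_empty, Ne, support_eq_empty]
  obtain ⟨d, hd, hdeq⟩ := Finset.exists_mem_eq_sup p.support hsupp
    (fun s => s.sum fun _ e => e)
  have hdeg : d.degree = p.totalDegree := by
    rw [totalDegree, hdeq]; rfl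
  intro hzero
  have := coeff_homogeneousComponent (n := p.totalDegree) (φ := p) d
  rw [hzero, if_pos hdeg] at this
  exact (mem_support_iff.mp hd) this.symm

lemma totalDegree_factor_le {l q : Poly2} (hl : l.totalDegree = 1) {n : ℕ}
    (h : (l * q).totalDegree ≤ n + 1) : q.totalDegree ≤ n := by
  by_contra hgt
  push_neg at hgt
  set m := q.totalDegree with hm
  have hq0 : q ≠ 0 := by
    intro h0; rw [h0] at hm; simp [totalDegree_zero] at hm; omega
  have hl0 : l ≠ 0 := by
    intro h0; rw [h0] at hl; simp [totalDegree_zero] at hl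
  set l1 := homogeneousComponent 1 l with hl1def
  set qm := homogeneousComponent m q with hqmdef
  have hl1ne : l1 ≠ 0 := by rw [hl1def, ← hl]; exact top_component_ne_zero hl0
  have hqmne : qm ≠ 0 := top_component_ne_zero hq0
  -- decompositions
  have hldec : l = l1 + homogeneousComponent 0 l := by
    conv_lhs => rw [← sum_homogeneousComponent l]
    rw [hl]
    simp [Finset.sum_range_succ, add_comm]
    exact hl1def.symm
  set r := ∑ i ∈ Finset.range m, homogeneousComponent i q with hrdef
  have hqdec : q = qm + r := by
    conv_lhs => rw [← sum_homogeneousComponent q]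
    rw [← hm, Finset.sum_range_succ, add_comm]
  have hrdeg : r.totalDegree < m := by
    have : r.totalDegree ≤ (Finset.range m).sup (fun i => (homogeneousComponent i q).totalDegree) :=
      totalDegree_finset_sum _ _
    refine lt_of_le_of_lt this ?_
    rw [Finset.sup_lt_iff (show (⊥:ℕ) < m by rw [Nat.bot_eq_zero]; omega)]
    intro i hi
    exact lt_of_le_of_lt ((homogeneousComponent_isHomogeneous i q).totalDegree_le)
      (Finset.mem_range.mp hi)
  have hl0deg : (homogeneousComponent 0 l).totalDegree ≤ 0 :=
    (homogeneousComponent_isHomogeneous 0 l).totalDegree_le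
  have hl1deg : l1.totalDegree ≤ 1 := (homogeneousComponent_isHomogeneous 1 l).totalDegree_le
  have hqmdeg : qm.totalDegree ≤ m := (homogeneousComponent_isHomogeneous m q).totalDegree_le
  -- the top homogeneous component of l * q is l1 * qm ≠ 0
  have hprod : l * q = l1 * qm + (l1 * r + homogeneousComponent 0 l * qm
      + homogeneousComponent 0 l * r) := by
    conv_lhs => rw [hldec, hqdec]
    ring
  have hcomp : homogeneousComponent (m + 1) (l * q) = l1 * qm := by
    rw [hprod, map_add]
    have h1 : homogeneousComponent (m + 1) (l1 * qm) = l1 * qm := by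
      have hmem : l1 * qm ∈ homogeneousSubmodule (Fin 2) ℝ (m + 1) := by
        rw [mem_homogeneousSubmodule]
        have := (homogeneousComponent_isHomogeneous 1 l).mul
          (homogeneousComponent_isHomogeneous m q)
        rwa [add_comm] at this
      rw [homogeneousComponent_of_mem hmem, if_pos rfl]
    have h2 : homogeneousComponent (m + 1) (l1 * r + homogeneousComponent 0 l * qm
        + homogeneousComponent 0 l * r) = 0 := by
      apply homogeneousComponent_eq_zero
      refine lt_of_le_of_lt (totalDegree_add _ _) ?_
      rw [max_lt_iff]
      constructor
      · refine lt_of_le_of_lt (totalDegree_add _ _) ?_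
        rw [max_lt_iff]
        constructor
        · exact lt_of_le_of_lt (totalDegree_mul _ _) (by omega)
        · exact lt_of_le_of_lt (totalDegree_mul _ _) (by omega)
      · exact lt_of_le_of_lt (totalDegree_mul _ _) (by omega)
    rw [h1, h2, add_zero]
  have hzero : homogeneousComponent (m + 1) (l * q) = 0 := by
    apply homogeneousComponent_eq_zero; omega
  rw [hcomp] at hzero
  exact mul_ne_zero hl1ne hqmne hzero

/-- Index type for monomials of total degree at most 3 in two variables. -/
abbrev MonIdx := {p : Fin 4 × Fin 4 // p.1.val + p.2.val ≤ 3}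

lemma monIdx_card : Fintype.card MonIdx = 10 := by decide

/-- The vector of monomial values at a point. -/
def monVec (B : Fin 2 → ℝ) : MonIdx → ℝ := fun d => B 0 ^ (d.1.1 : ℕ) * B 1 ^ (d.1.2 : ℕ)

lemma exists_dependence (Y : Finset (Fin 2 → ℝ)) (hY : Y.card = 11) :
    ∃ g : (Fin 2 → ℝ) → ℝ,
      (∀ B, B ∉ Y → g B = 0) ∧ (∃ B ∈ Y, g B ≠ 0) ∧
      (∀ i j : ℕ, i + j ≤ 3 → ∑ B ∈ Y, g B * (B 0 ^ i * B 1 ^ j) = 0) := by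
  have hnotli : ¬ LinearIndependent ℝ (fun b : ↥Y => monVec (b : Fin 2 → ℝ)) := by
    intro hli
    have := LinearIndependent.fintype_card_le_finrank hli
    rw [Module.finrank_fintype_fun_eq_card, monIdx_card, Fintype.card_coe, hY] at this
    omega
  rw [Fintype.not_linearIndependent_iff] at hnotli
  obtain ⟨g, hsum, b₀, hb₀⟩ := hnotli
  refine ⟨fun B => if h : B ∈ Y then g ⟨B, h⟩ else 0, ?_, ?_, ?_⟩
  · intro B hB; exact dif_neg hB
  · exact ⟨b₀, b₀.2, by simpa using hb₀⟩
  · intro i j hij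
    have hi : i < 4 := by omega
    have hj : j < 4 := by omega
    have hd : ((⟨i, hi⟩ : Fin 4).val + (⟨j, hj⟩ : Fin 4).val ≤ 3) := hij
    set d : MonIdx := ⟨(⟨i, hi⟩, ⟨j, hj⟩), hd⟩ with hddef
    have hzero := congrFun hsum d
    simp only [Finset.sum_apply, Pi.smul_apply, smul_eq_mul, Pi.zero_apply] at hzero
    have e1 : ∑ B ∈ Y, (if h : B ∈ Y then g ⟨B, h⟩ else 0) * (B 0 ^ i * B 1 ^ j)
        = ∑ b : ↥Y, g b * monVec (b : Fin 2 → ℝ) d := by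
      rw [← Finset.sum_attach Y
        (fun B => (if h : B ∈ Y then g ⟨B, h⟩ else 0) * (B 0 ^ i * B 1 ^ j))]
      apply Finset.sum_congr rfl
      intro b _
      rw [dif_pos b.2]
      rfl
    show (∑ B ∈ Y, (if h : B ∈ Y then g ⟨B, h⟩ else 0) * (B 0 ^ i * B 1 ^ j)) = 0
    rw [e1, hzero]

lemma support_degree_le {q : Poly2} (hq : q.totalDegree ≤ 3) {d : Fin 2 →₀ ℕ}
    (hd : d ∈ q.support) : d 0 + d 1 ≤ 3 := by
  have h1 := le_totalDegree hd
  have h2 : (d.sum fun _ e => e) = d 0 + d 1 := by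
    rw [Finsupp.sum_fintype _ _ (fun _ => rfl), Fin.sum_univ_two]
  omega

lemma key_sum (Y : Finset (Fin 2 → ℝ)) (g : (Fin 2 → ℝ) → ℝ)
    (hmon : ∀ i j : ℕ, i + j ≤ 3 → ∑ B ∈ Y, g B * (B 0 ^ i * B 1 ^ j) = 0)
    (q : Poly2) (hq : q.totalDegree ≤ 3) :
    ∑ B ∈ Y, g B * evalPt B q = 0 := by
  have heval : ∀ B : Fin 2 → ℝ,
      evalPt B q = ∑ d ∈ q.support, coeff d q * (B 0 ^ d 0 * B 1 ^ d 1) := by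
    intro B
    rw [evalPt, eval_eq']
    apply Finset.sum_congr rfl
    intro d _
    rw [Fin.prod_univ_two]
  calc ∑ B ∈ Y, g B * evalPt B q
      = ∑ B ∈ Y, ∑ d ∈ q.support, coeff d q * (g B * (B 0 ^ d 0 * B 1 ^ d 1)) := by
        apply Finset.sum_congr rfl
        intro B _
        rw [heval B, Finset.mul_sum]
        apply Finset.sum_congr rfl
        intro d _
        ring
    _ = ∑ d ∈ q.support, coeff d q * ∑ B ∈ Y, g B * (B 0 ^ d 0 * B 1 ^ d 1) := by
        rw [Finset.sum_comm]
        apply Finset.sum_congr rfl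
        intro d _
        rw [Finset.mul_sum]
    _ = 0 := by
        apply Finset.sum_eq_zero
        intro d hd
        rw [hmon (d 0) (d 1) (support_degree_le hq hd), mul_zero]


/-- In a `GC₄`-set of 15 nodes with no 5 collinear nodes, a 4-node line is
used by at most three nodes. -/
theorem stmt6 (X : Finset (Fin 2 → ℝ)) (hGC : GCSet 4 X) (hcard : X.card = 15)
    (h5 : NoFiveCollinear X)
    (ℓ : Poly2) (hℓ : IsLine ℓ) (hk : (nodesOn X ℓ).card = 4) :
    (X.filter (fun A => Uses 4 X A ℓ)).card ≤ 3 := by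
  classical
  set Y := X \ nodesOn X ℓ with hYdef
  have hnodesub : nodesOn X ℓ ⊆ X := Finset.filter_subset _ _
  have hYcard : Y.card = 11 := by
    rw [hYdef, Finset.card_sdiff_of_subset hnodesub, hcard, hk]
  have hYX : Y ⊆ X := Finset.sdiff_subset
  have hYl : ∀ B ∈ Y, evalPt B ℓ ≠ 0 := by
    intro B hB hzero
    rcases Finset.mem_sdiff.mp hB with ⟨hBX, hBn⟩
    exact hBn (Finset.mem_filter.mpr ⟨hBX, hzero⟩)
  obtain ⟨g, hgzero, ⟨b₀, hb₀Y, hb₀⟩, hmon⟩ := exists_dependence Y hYcard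
  -- the support of the dependence
  set W := Y.filter (fun B => g B ≠ 0) with hWdef
  have hWY : W ⊆ Y := Finset.filter_subset _ _
  -- sums over Y reduce to sums over W
  have hsumW : ∀ q : Poly2, q.totalDegree ≤ 3 → ∑ B ∈ W, g B * evalPt B q = 0 := by
    intro q hq
    rw [← key_sum Y g hmon q hq]
    apply Finset.sum_subset hWY
    intro B hBY hBW
    have : g B = 0 := by
      by_contra hne
      exact hBW (Finset.mem_filter.mpr ⟨hBY, hne⟩)
    rw [this, zero_mul]
  -- the support has at least 8 elements
  have hW8 : 8 ≤ W.card := by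
    by_contra hlt
    push_neg at hlt
    have hWne : W.Nonempty := ⟨b₀, Finset.mem_filter.mpr ⟨hb₀Y, hb₀⟩⟩
    obtain ⟨A₀, hA₀⟩ := hWne
    rcases Finset.mem_filter.mp hA₀ with ⟨hA₀Y, hgA₀⟩
    set S := W.erase A₀ with hSdef
    have hScard : S.card ≤ 6 := by
      rw [hSdef, Finset.card_erase_of_mem hA₀]
      omega
    have hA₀S : A₀ ∉ S := Finset.notMem_erase _ _
    have hSX : S ⊆ X := fun B hB => hYX (hWY (Finset.mem_of_mem_erase hB))
    have hclass : ∀ B ∈ S, (S.filter (fun C => det3 A₀ B C = 0)).card ≤ 3 := by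
      intro B hB
      exact class_card_le h5 (hYX hA₀Y) hSX hA₀S hB
    obtain ⟨q, hqdeg, hqvan, hqA⟩ := cover_lemma 3 S A₀ hA₀S (by omega) hclass
    have h0 := hsumW q hqdeg
    rw [← Finset.add_sum_erase W (fun B => g B * evalPt B q) hA₀] at h0
    rw [Finset.sum_eq_zero (fun B hB => by
      rw [hqvan B hB, mul_zero]), add_zero] at h0
    rcases mul_eq_zero.mp h0 with h | h
    · exact hgA₀ h
    · exact hqA h
  -- every user of ℓ lies in Y but outside W
  have husers : X.filter (fun A => Uses 4 X A ℓ) ⊆ Y \ W := by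
    intro A hA
    rcases Finset.mem_filter.mp hA with ⟨hAX, p, ⟨hpdeg, hp1, hp0⟩, q, rfl⟩
    have hAq : evalPt A ℓ * evalPt A q = 1 := by
      rw [← hp1, evalPt, evalPt, evalPt, map_mul]
    have hAl : evalPt A ℓ ≠ 0 := left_ne_zero_of_mul_eq_one hAq
    have hAqne : evalPt A q ≠ 0 := right_ne_zero_of_mul_eq_one hAq
    have hAY : A ∈ Y := Finset.mem_sdiff.mpr
      ⟨hAX, fun h => hAl (Finset.mem_filter.mp h).2⟩
    have hqdeg : q.totalDegree ≤ 3 := totalDegree_factor_le hℓ hpdeg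
    have hqvan : ∀ B ∈ Y, B ≠ A → evalPt B q = 0 := by
      intro B hBY hBA
      have h0 : evalPt B ℓ * evalPt B q = 0 := by
        have hm : evalPt B (ℓ * q) = evalPt B ℓ * evalPt B q := by simp [evalPt]
        rw [← hm]
        exact hp0 B (hYX hBY) hBA
      rcases mul_eq_zero.mp h0 with h | h
      · exact absurd h (hYl B hBY)
      · exact h
    have h0 := key_sum Y g hmon q hqdeg
    rw [← Finset.add_sum_erase Y (fun B => g B * evalPt B q) hAY] at h0
    rw [Finset.sum_eq_zero (fun B hB => by
      rw [hqvan B (Finset.mem_of_mem_erase hB) (Finset.ne_of_mem_erase hB), mul_zero]),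
      add_zero] at h0
    have hgA : g A = 0 := by
      rcases mul_eq_zero.mp h0 with h | h
      · exact h
      · exact absurd h hAqne
    exact Finset.mem_sdiff.mpr ⟨hAY, fun hW => (Finset.mem_filter.mp hW).2 hgA⟩
  have h1 := Finset.card_le_card husers
  have h2 : (Y \ W).card = Y.card - W.card := Finset.card_sdiff_of_subset hWY
  omega
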